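/- arXiv:1103.5539 — 5 statements merged into one kernel-verified Lean document; each statement's English description precedes it below -/
import Mathlib

section
/- Let k be a field, R' a finitely generated k-algebra with maximal ideal m' satisfying R'/m' ≅ k, and let E' be an injective envelope of k = R'/m' over R'. Let I ⊆ m' be an ideal and set R = R'/I. Then the submodule E = { e ∈ E' : I·e = 0 } of all elements of E' annihilated by I, regarded as an R-module, is an injective envelope of k = R/(m'/I) over the ring R. -/
/-- `E` is an injective envelope of `N` over `T`, witnessed by the `T`-linear map
`f : N → E`: the module `E` is injective, `f` is injective, and the image of `f` is
an essential submodule of `E` (every nonzero submodule meets it nontrivially). -/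
def IsInjectiveEnvelope (T : Type) [CommRing T] {N E : Type} [AddCommGroup N] [Module T N]
    [AddCommGroup E] [Module T E] (f : N →ₗ[T] E) : Prop :=
  Module.Injective T E ∧ Function.Injective f ∧
    ∀ P : Submodule T E, P ≠ ⊥ → LinearMap.range f ⊓ P ≠ ⊥

/-- Let `k` be a field, `R'` a finitely generated `k`-algebra with a
maximal ideal `𝔪'` such that `R'/𝔪' ≅ k`, and `E'` an injective envelope of
`k = R'/𝔪'` over `R'`. Let `I ⊆ 𝔪'` be an ideal and `R = R'/I`. Then the
`I`-torsion submodule `E = {e ∈ E' : I·e = 0}`, regarded as an `R`-module, is an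
injective envelope of `k = R/(𝔪'/I)` over `R`. -/
theorem torsion_submodule_of_injective_envelope_is_injective_envelope
    (k R' : Type) [Field k] [CommRing R'] [Algebra k R'] [Algebra.FiniteType k R']
    (m' : Ideal R') [m'.IsMaximal] (hres : Function.Bijective (algebraMap k (R' ⧸ m')))
    (E' : Type) [AddCommGroup E'] [Module R' E']
    (f : (R' ⧸ m') →ₗ[R'] E') (hf : IsInjectiveEnvelope R' f)
    (I : Ideal R') (hI : I ≤ m') :
    -- `E = {e ∈ E' : I e = 0}` is a module over `R = R'/I`:
    letI : Module (R' ⧸ I) (Submodule.torsionBySet R' E' I) :=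
      (Submodule.torsionBySet_isTorsionBySet (I : Set R')).module
    -- any `R`-linear map from `k = R/(𝔪'/I)` to `E` sending `1` to `f(1)` is an
    -- injective envelope of `k` over `R`:
    ∀ (h : ((R' ⧸ I) ⧸ Ideal.map (Ideal.Quotient.mk I) m') →ₗ[R' ⧸ I]
        (Submodule.torsionBySet R' E' I)),
      (h (Submodule.Quotient.mk 1) : E') = f (Ideal.Quotient.mk m' 1) →
      IsInjectiveEnvelope (R' ⧸ I) h := by
  intro h hh1
  obtain ⟨hinj, finj, fess⟩ := hf
  -- the quotient-smul on the torsion submodule is computed via representatives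
  have hsmul : ∀ (c : R') (e : Submodule.torsionBySet R' E' (I : Set R')),
      ((Ideal.Quotient.mk I c • e : Submodule.torsionBySet R' E' (I : Set R')) : E')
        = c • (e : E') := fun _ _ => rfl
  -- in `R' ⧸ m'`, `mk c = c • mk 1`
  have hmk : ∀ c : R', Ideal.Quotient.mk m' c = c • Ideal.Quotient.mk m' 1 := by
    intro c
    show _ = Ideal.Quotient.mk m' (c * 1)
    rw [mul_one]
  -- key computation: `h` sends `mk (mk c)` to `f (mk c)`.
  have key : ∀ c : R',
      ((h (Submodule.Quotient.mk (Ideal.Quotient.mk I c)) : E')) = f (Ideal.Quotient.mk m' c) := by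
    intro c
    have h1 : (Submodule.Quotient.mk (Ideal.Quotient.mk I c) :
        (R' ⧸ I) ⧸ Ideal.map (Ideal.Quotient.mk I) m')
        = Ideal.Quotient.mk I c • Submodule.Quotient.mk 1 := by
      show _ = Submodule.Quotient.mk (Ideal.Quotient.mk I c • 1)
      rw [smul_eq_mul, mul_one]
    rw [h1, map_smul, hsmul, hh1, ← map_smul, ← hmk]
  -- Baer criterion for `E` over `R' ⧸ I`
  have baer : Module.Baer (R' ⧸ I) (Submodule.torsionBySet R' E' (I : Set R')) := by
    intro J g
    set J' : Ideal R' := J.comap (Ideal.Quotient.mk I) with hJ'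
    have memJ' : ∀ c : R', c ∈ J' ↔ Ideal.Quotient.mk I c ∈ J := fun c => Iff.rfl
    let φ : J' →ₗ[R'] E' :=
      { toFun := fun x => (g ⟨Ideal.Quotient.mk I x.1, x.2⟩ : E')
        map_add' := by
          intro x y
          have h2 : (⟨Ideal.Quotient.mk I (x + y).1, (x + y).2⟩ : J)
              = ⟨Ideal.Quotient.mk I x.1, x.2⟩ + ⟨Ideal.Quotient.mk I y.1, y.2⟩ := by
            ext; simp
          show (g ⟨Ideal.Quotient.mk I (x + y).1, (x + y).2⟩ : E') = _
          rw [h2, map_add]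
          rfl
        map_smul' := by
          intro r x
          have h2 : (⟨Ideal.Quotient.mk I (r • x).1, (r • x).2⟩ : J)
              = Ideal.Quotient.mk I r • ⟨Ideal.Quotient.mk I x.1, x.2⟩ := by
            ext; simp
          show (g ⟨Ideal.Quotient.mk I (r • x).1, (r • x).2⟩ : E') = _
          rw [h2, map_smul]
          exact hsmul r _ }
    obtain ⟨g₂, hg₂⟩ := hinj.out J'.subtype (Submodule.injective_subtype J') φ
    have htors : g₂ 1 ∈ Submodule.torsionBySet R' E' (I : Set R') := by
      rw [Submodule.mem_torsionBySet_iff]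
      rintro ⟨i, hi⟩
      have himem : i ∈ J' := by
        rw [memJ', Ideal.Quotient.eq_zero_iff_mem.mpr hi]
        exact J.zero_mem
      have e1 : i • g₂ 1 = g₂ i := by rw [← map_smul]; simp
      show i • g₂ 1 = 0
      rw [e1]
      have e2 := hg₂ ⟨i, himem⟩
      simp only [Submodule.coe_subtype] at e2
      rw [e2]
      have hz : (⟨Ideal.Quotient.mk I i, himem⟩ : J) = 0 := by
        ext; simp [Ideal.Quotient.eq_zero_iff_mem.mpr hi]
      show (g ⟨Ideal.Quotient.mk I i, himem⟩ : E') = 0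
      rw [hz, map_zero]
      rfl
    refine ⟨LinearMap.toSpanSingleton (R' ⧸ I) _ ⟨g₂ 1, htors⟩, ?_⟩
    intro x hx
    obtain ⟨c, rfl⟩ := Ideal.Quotient.mk_surjective x
    have hc : c ∈ J' := hx
    apply Subtype.ext
    show ((Ideal.Quotient.mk I c • (⟨g₂ 1, htors⟩ : Submodule.torsionBySet R' E' (I : Set R')) :
        Submodule.torsionBySet R' E' (I : Set R')) : E')
      = (g ⟨Ideal.Quotient.mk I c, hx⟩ : E')
    rw [hsmul]
    show c • g₂ 1 = _
    have e1 : c • g₂ 1 = g₂ c := by rw [← map_smul]; simp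
    rw [e1]
    have e2 := hg₂ ⟨c, hc⟩
    simp only [Submodule.coe_subtype] at e2
    exact e2
  refine ⟨baer.injective, ?_, ?_⟩
  · -- injectivity of h
    rw [← LinearMap.ker_eq_bot, eq_bot_iff]
    intro x hx
    obtain ⟨y, rfl⟩ := Submodule.Quotient.mk_surjective _ x
    obtain ⟨c, rfl⟩ := Ideal.Quotient.mk_surjective y
    have hx0 : h (Submodule.Quotient.mk (Ideal.Quotient.mk I c)) = 0 := hx
    have hf0 : f (Ideal.Quotient.mk m' c) = 0 := by rw [← key c, hx0]; rfl
    have hc0 : Ideal.Quotient.mk m' c = 0 := by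
      apply finj
      rw [hf0, map_zero]
    have hcm : c ∈ m' := Ideal.Quotient.eq_zero_iff_mem.mp hc0
    show (Submodule.Quotient.mk (Ideal.Quotient.mk I c) :
        (R' ⧸ I) ⧸ Ideal.map (Ideal.Quotient.mk I) m') ∈ (⊥ : Submodule _ _)
    rw [Submodule.mem_bot, Submodule.Quotient.mk_eq_zero]
    exact Ideal.mem_map_of_mem _ hcm
  · -- essentiality
    intro P hP
    let P' : Submodule R' E' :=
      { carrier := (↑) '' (P : Set (Submodule.torsionBySet R' E' (I : Set R')))
        add_mem' := by
          rintro _ _ ⟨a, ha, rfl⟩ ⟨b, hb, rfl⟩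
          exact ⟨a + b, P.add_mem ha hb, rfl⟩
        zero_mem' := ⟨0, P.zero_mem, rfl⟩
        smul_mem' := by
          rintro r _ ⟨e, he, rfl⟩
          exact ⟨Ideal.Quotient.mk I r • e, P.smul_mem _ he, hsmul r e⟩ }
    have hP' : P' ≠ ⊥ := by
      obtain ⟨x, hxP, hx0⟩ := Submodule.exists_mem_ne_zero_of_ne_bot hP
      rw [Submodule.ne_bot_iff]
      refine ⟨(x : E'), ⟨x, hxP, rfl⟩, ?_⟩
      simpa using hx0
    obtain ⟨e, hemem, he0⟩ := Submodule.exists_mem_ne_zero_of_ne_bot (fess P' hP')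
    obtain ⟨hef, heP'⟩ := Submodule.mem_inf.mp hemem
    obtain ⟨y, rfl⟩ := hef
    obtain ⟨c, rfl⟩ := Ideal.Quotient.mk_surjective y
    obtain ⟨e₁, he₁P, he₁⟩ := heP'
    rw [Submodule.ne_bot_iff]
    refine ⟨e₁, Submodule.mem_inf.mpr
      ⟨⟨Submodule.Quotient.mk (Ideal.Quotient.mk I c), ?_⟩, he₁P⟩, ?_⟩
    · apply Subtype.ext
      rw [key c, he₁]
    · intro hz
      apply he0
      rw [← he₁, hz]
      rfl
end

section
/- Let k be a field, R' and S' k-algebras, I ⊆ R' and J ⊆ S' ideals, and E' an R'-module and F' an S'-module. Inside the R' ⊗_k S'-module E' ⊗_k F', the submodule of elements annihilated by the ideal I ⊗_k S' + R' ⊗_k J is exactly E ⊗_k F, where E = { e ∈ E' : I·e = 0 } and F = { f ∈ F' : J·f = 0 }. -/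
open TensorProduct

noncomputable section Aux

variable (k E' F' : Type) [Field k] [AddCommGroup E'] [Module k E']
  [AddCommGroup F'] [Module k F']

local instance : DecidableEq ↑(Module.Basis.ofVectorSpaceIndex k F') := Classical.decEq _

noncomputable def psiR (M : Type) [AddCommGroup M] [Module k M] :
    M ⊗[k] F' ≃ₗ[k] ((Module.Basis.ofVectorSpaceIndex k F') →₀ M) :=
  (LinearEquiv.lTensor M (Module.Basis.ofVectorSpace k F').repr).trans
    (TensorProduct.finsuppScalarRight k k M _)

lemma psiR_natural {M M' : Type} [AddCommGroup M] [Module k M] [AddCommGroup M'] [Module k M']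
    (f : M →ₗ[k] M') (t : M ⊗[k] F') :
    psiR k F' M' (f.rTensor F' t) = Finsupp.mapRange.linearMap f (psiR k F' M t) := by
  induction t using TensorProduct.induction_on with
  | zero => simp
  | add x y hx hy => simp only [map_add, hx, hy]
  | tmul m n =>
    ext i
    simp [psiR, LinearEquiv.lTensor, TensorProduct.finsuppScalarRight_apply_tmul_apply,
      map_smul]

lemma exists_rTensor_of_forall_ker (S : Set (E' →ₗ[k] E')) (E : Submodule k E')
    (hE : ∀ e, e ∈ E ↔ ∀ s ∈ S, s e = 0) (z : E' ⊗[k] F')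
    (hz : ∀ s ∈ S, LinearMap.rTensor F' s z = 0) :
    ∃ w : ↥E ⊗[k] F', LinearMap.rTensor F' E.subtype w = z := by
  have hcoord : ∀ i, psiR k F' E' z i ∈ E := by
    intro i
    rw [hE]
    intro s hs
    have := psiR_natural k F' s z
    rw [hz s hs, map_zero] at this
    have h3 := DFunLike.congr_fun this.symm i
    simpa using h3
  refine ⟨(psiR k F' ↥E).symm ⟨(psiR k F' E' z).support,
    fun i => ⟨psiR k F' E' z i, hcoord i⟩,
    fun i => by simp [Finsupp.mem_support_iff, Subtype.ext_iff]⟩, ?_⟩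
  apply (psiR k F' E').injective
  rw [psiR_natural, LinearEquiv.apply_symm_apply]
  ext i
  simp [Finsupp.mapRange_apply]

end Aux

noncomputable section Aux2

variable (k E' F' : Type) [Field k] [AddCommGroup E'] [Module k E']
  [AddCommGroup F'] [Module k F']

local instance : DecidableEq ↑(Module.Basis.ofVectorSpaceIndex k E') := Classical.decEq _

noncomputable def psiL (N : Type) [AddCommGroup N] [Module k N] :
    E' ⊗[k] N ≃ₗ[k] ((Module.Basis.ofVectorSpaceIndex k E') →₀ N) :=
  (LinearEquiv.rTensor N (Module.Basis.ofVectorSpace k E').repr).trans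
    (TensorProduct.finsuppScalarLeft k N _)

lemma psiL_natural {N N' : Type} [AddCommGroup N] [Module k N] [AddCommGroup N'] [Module k N']
    (f : N →ₗ[k] N') (t : E' ⊗[k] N) :
    psiL k E' N' (f.lTensor E' t) = Finsupp.mapRange.linearMap f (psiL k E' N t) := by
  induction t using TensorProduct.induction_on with
  | zero => simp
  | add x y hx hy => simp only [map_add, hx, hy]
  | tmul m n =>
    ext i
    simp [psiL, LinearEquiv.rTensor, TensorProduct.finsuppScalarLeft_apply_tmul_apply,
      map_smul]

lemma exists_lTensor_of_forall_ker (S : Set (F' →ₗ[k] F')) (F : Submodule k F')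
    (hF : ∀ x, x ∈ F ↔ ∀ s ∈ S, s x = 0) (z : E' ⊗[k] F')
    (hz : ∀ s ∈ S, LinearMap.lTensor E' s z = 0) :
    ∃ w : E' ⊗[k] ↥F, LinearMap.lTensor E' F.subtype w = z := by
  have hcoord : ∀ i, psiL k E' F' z i ∈ F := by
    intro i
    rw [hF]
    intro s hs
    have := psiL_natural k E' s z
    rw [hz s hs, map_zero] at this
    have h3 := DFunLike.congr_fun this.symm i
    simpa using h3
  refine ⟨(psiL k E' ↥F).symm ⟨(psiL k E' F' z).support,
    fun i => ⟨psiL k E' F' z i, hcoord i⟩,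
    fun i => by simp [Finsupp.mem_support_iff, Subtype.ext_iff]⟩, ?_⟩
  apply (psiL k E' F').injective
  rw [psiL_natural, LinearEquiv.apply_symm_apply]
  ext i
  simp [Finsupp.mapRange_apply]

end Aux2

section TensorModule

variable (k A B M N : Type) [Field k] [CommRing A] [CommRing B] [Algebra k A] [Algebra k B]
    [AddCommGroup M] [Module k M] [Module A M] [IsScalarTower k A M]
    [AddCommGroup N] [Module k N] [Module B N] [IsScalarTower k B N]

/-- `f ↦ 1_M ⊗ f` as a ring homomorphism on endomorphisms. -/
noncomputable def lTensorEndHom : Module.End k N →+* Module.End k (M ⊗[k] N) where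
  toFun f := LinearMap.lTensor M f
  map_one' := LinearMap.lTensor_id M N
  map_mul' f g := LinearMap.lTensor_comp M f g
  map_zero' := LinearMap.lTensor_zero M
  map_add' := LinearMap.lTensor_add M

/-- The action of `B` on `M ⊗[k] N` through the second tensor factor. -/
noncomputable def rightAlgHom : B →ₐ[k] Module.End k (M ⊗[k] N) :=
  AlgHom.mk' ((lTensorEndHom k M N).comp (Module.toModuleEnd k N : B →+* Module.End k N))
    (fun c b => by
      have h1 : (Module.toModuleEnd k N : B →+* Module.End k N) (c • b)
          = c • (Module.toModuleEnd k N : B →+* Module.End k N) b := by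
        apply LinearMap.ext
        intro n
        show (c • b) • n = c • (b • n)
        rw [smul_assoc]
      show (lTensorEndHom k M N) _ = c • (lTensorEndHom k M N) _
      rw [h1]
      show LinearMap.lTensor M _ = c • LinearMap.lTensor M _
      rw [LinearMap.lTensor_smul])

/-- The action of `A` on `M ⊗[k] N` through the first tensor factor. -/
noncomputable def leftAlgHom : A →ₐ[k] Module.End k (M ⊗[k] N) :=
  Algebra.lsmul k k (M ⊗[k] N)

lemma leftRightCommute (a : A) (b : B) :
    Commute (leftAlgHom k A M N a) (rightAlgHom k B M N b) := by
  apply LinearMap.ext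
  intro z
  show a • (LinearMap.lTensor M ((Module.toModuleEnd k N : B →+* Module.End k N) b)) z
      = (LinearMap.lTensor M ((Module.toModuleEnd k N : B →+* Module.End k N) b)) (a • z)
  induction z using TensorProduct.induction_on with
  | zero => simp
  | tmul m n => rw [smul_tmul']; rfl
  | add x y hx hy => rw [smul_add, map_add, map_add, smul_add, hx, hy]

/-- The canonical `A ⊗ₖ B`-module structure on `M ⊗ₖ N`, for `M` an `A`-module and
`N` a `B`-module; it satisfies `(a ⊗ b) • (m ⊗ n) = (a • m) ⊗ (b • n)`. -/
noncomputable def tensorTensorModule : Module (A ⊗[k] B) (M ⊗[k] N) :=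
  Module.compHom _ (Algebra.TensorProduct.lift (leftAlgHom k A M N) (rightAlgHom k B M N)
    (leftRightCommute k A B M N)).toRingHom

lemma tensorTensorModule_smul_tmul (a : A) (b : B) (m : M) (n : N) :
    letI := tensorTensorModule k A B M N
    (a ⊗ₜ[k] b) • (m ⊗ₜ[k] n) = (a • m) ⊗ₜ[k] (b • n) := by
  letI := tensorTensorModule k A B M N
  show (Algebra.TensorProduct.lift (leftAlgHom k A M N) (rightAlgHom k B M N)
    (leftRightCommute k A B M N) (a ⊗ₜ[k] b)) (m ⊗ₜ[k] n) = (a • m) ⊗ₜ[k] (b • n)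
  rw [Algebra.TensorProduct.lift_tmul]
  show a • (LinearMap.lTensor M ((Module.toModuleEnd k N : B →+* Module.End k N) b)) (m ⊗ₜ[k] n)
      = (a • m) ⊗ₜ[k] (b • n)
  rw [LinearMap.lTensor_tmul, smul_tmul']
  rfl

end TensorModule

/-- Let `k` be a field, `R'` and `S'` `k`-algebras, `I ⊆ R'` and
`J ⊆ S'` ideals, `E'` an `R'`-module and `F'` an `S'`-module. Inside the
`R' ⊗ₖ S'`-module `E' ⊗ₖ F'`, the submodule of elements annihilated by the ideal
`I ⊗ S' + R' ⊗ J` is exactly `E ⊗ₖ F`, where `E = {e ∈ E' : I·e = 0}` and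
`F = {f ∈ F' : J·f = 0}`. -/
theorem annihilated_submodule_of_tensor_eq_tensor_of_annihilated
    (k R' S' : Type) [Field k] [CommRing R'] [CommRing S'] [Algebra k R'] [Algebra k S']
    (I : Ideal R') (J : Ideal S')
    (E' F' : Type) [AddCommGroup E'] [Module k E'] [Module R' E'] [IsScalarTower k R' E']
    [AddCommGroup F'] [Module k F'] [Module S' F'] [IsScalarTower k S' F']
    (E : Submodule R' E') (hE : E = {e : E' | ∀ a ∈ I, a • e = 0})
    (F : Submodule S' F') (hF : F = {x : F' | ∀ b ∈ J, b • x = 0}) :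
    letI : Module (R' ⊗[k] S') (E' ⊗[k] F') := tensorTensorModule k R' S' E' F'
    ∀ z : E' ⊗[k] F',
      (∀ r ∈ Ideal.map (Algebra.TensorProduct.includeLeft : R' →ₐ[k] R' ⊗[k] S') I ⊔
          Ideal.map (Algebra.TensorProduct.includeRight : S' →ₐ[k] R' ⊗[k] S') J,
        r • z = 0) ↔
      z ∈ LinearMap.range
        (TensorProduct.map (E.subtype.restrictScalars k) (F.subtype.restrictScalars k)) := by
  intro z
  letI : Module (R' ⊗[k] S') (E' ⊗[k] F') := tensorTensorModule k R' S' E' F'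
  -- scalar multiplication operators
  set la : R' → (E' →ₗ[k] E') := fun a => (LinearMap.lsmul R' E' a).restrictScalars k with hla
  set lb : S' → (F' →ₗ[k] F') := fun b => (LinearMap.lsmul S' F' b).restrictScalars k with hlb
  have hL : ∀ (a : R') (t : E' ⊗[k] F'),
      (a ⊗ₜ[k] (1 : S')) • t = LinearMap.rTensor F' (la a) t := by
    intro a t
    induction t using TensorProduct.induction_on with
    | zero => rw [smul_zero, map_zero]
    | tmul m n =>
      refine (tensorTensorModule_smul_tmul k R' S' E' F' a 1 m n).trans ?_
      rw [one_smul]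
      rfl
    | add x y hx hy => rw [smul_add, map_add, hx, hy]
  have hR : ∀ (b : S') (t : E' ⊗[k] F'),
      ((1 : R') ⊗ₜ[k] b) • t = LinearMap.lTensor E' (lb b) t := by
    intro b t
    induction t using TensorProduct.induction_on with
    | zero => rw [smul_zero, map_zero]
    | tmul m n =>
      refine (tensorTensorModule_smul_tmul k R' S' E' F' 1 b m n).trans ?_
      rw [one_smul]
      rfl
    | add x y hx hy => rw [smul_add, map_add, hx, hy]
  set EK : Submodule k E' := E.restrictScalars k with hEK
  set FK : Submodule k F' := F.restrictScalars k with hFK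
  constructor
  · -- annihilated ⇒ in the image
    intro h
    have hIz : ∀ a ∈ I, LinearMap.rTensor F' (la a) z = 0 := by
      intro a ha
      rw [← hL]
      exact h _ (Ideal.mem_sup_left (Ideal.mem_map_of_mem _ ha))
    obtain ⟨w, hw⟩ := exists_rTensor_of_forall_ker k E' F' (la '' I) EK
      (by
        intro e
        constructor
        · rintro he s ⟨a, ha, rfl⟩
          have he' : e ∈ (E : Set E') := he
          rw [hE] at he'
          exact he' a ha
        · intro hs
          have : e ∈ (E : Set E') := by
            rw [hE]
            exact fun a ha => hs (la a) ⟨a, ha, rfl⟩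
          exact this)
      z (by rintro s ⟨a, ha, rfl⟩; exact hIz a ha)
    have hJw : ∀ b ∈ J, LinearMap.lTensor ↥EK (lb b) w = 0 := by
      intro b hb
      have hinj : Function.Injective (LinearMap.rTensor F' EK.subtype) :=
        Module.Flat.rTensor_preserves_injective_linearMap EK.subtype EK.injective_subtype
      apply hinj
      rw [map_zero]
      have h1 : LinearMap.rTensor F' EK.subtype (LinearMap.lTensor ↥EK (lb b) w)
          = LinearMap.lTensor E' (lb b) (LinearMap.rTensor F' EK.subtype w) := by
        rw [← LinearMap.comp_apply, ← LinearMap.comp_apply,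
          LinearMap.rTensor_comp_lTensor, LinearMap.lTensor_comp_rTensor]
      rw [h1, hw, ← hR]
      exact h _ (Ideal.mem_sup_right (Ideal.mem_map_of_mem _ hb))
    obtain ⟨u, hu⟩ := exists_lTensor_of_forall_ker k ↥EK F' (lb '' J) FK
      (by
        intro x
        constructor
        · rintro hx s ⟨b, hb, rfl⟩
          have hx' : x ∈ (F : Set F') := hx
          rw [hF] at hx'
          exact hx' b hb
        · intro hs
          have : x ∈ (F : Set F') := by
            rw [hF]
            exact fun b hb => hs (lb b) ⟨b, hb, rfl⟩
          exact this)
      w (by rintro s ⟨b, hb, rfl⟩; exact hJw b hb)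
    refine ⟨u, ?_⟩
    have h3 := DFunLike.congr_fun
      (LinearMap.rTensor_comp_lTensor (R := k) ↥EK EK.subtype FK.subtype) u
    have h2 : TensorProduct.map EK.subtype FK.subtype u = z := by
      rw [← h3]
      show LinearMap.rTensor F' EK.subtype (LinearMap.lTensor ↥EK FK.subtype u) = z
      have h4 : LinearMap.rTensor F' EK.subtype (LinearMap.lTensor ↥EK FK.subtype u)
          = LinearMap.rTensor F' EK.subtype w := congrArg _ hu
      exact h4.trans hw
    exact h2
  · -- in the image ⇒ annihilated
    rintro ⟨w, rfl⟩ r hr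
    set z0 := TensorProduct.map (E.subtype.restrictScalars k) (F.subtype.restrictScalars k) w
      with hz0
    have hleft : ∀ a ∈ I, (a ⊗ₜ[k] (1 : S')) • z0 = 0 := by
      intro a ha
      rw [hL]
      have hcomp : (la a) ∘ₗ (E.subtype.restrictScalars k) = 0 := by
        apply LinearMap.ext
        intro e
        have he : (e : E') ∈ (E : Set E') := e.2
        rw [hE] at he
        exact he a ha
      rw [hz0, ← LinearMap.comp_apply, LinearMap.rTensor_comp_map, hcomp]
      have : TensorProduct.map (0 : ↥E →ₗ[k] E') (F.subtype.restrictScalars k)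
          = 0 := by
        apply TensorProduct.ext'
        intro x y
        simp
      rw [this, LinearMap.zero_apply]
    have hright : ∀ b ∈ J, ((1 : R') ⊗ₜ[k] b) • z0 = 0 := by
      intro b hb
      rw [hR]
      have hcomp : (lb b) ∘ₗ (F.subtype.restrictScalars k) = 0 := by
        apply LinearMap.ext
        intro x
        have hx : (x : F') ∈ (F : Set F') := x.2
        rw [hF] at hx
        exact hx b hb
      rw [hz0, ← LinearMap.comp_apply, LinearMap.lTensor_comp_map, hcomp]
      have : TensorProduct.map (E.subtype.restrictScalars k) (0 : ↥F →ₗ[k] F')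
          = 0 := by
        apply TensorProduct.ext'
        intro x y
        simp
      rw [this, LinearMap.zero_apply]
    set K : Ideal (R' ⊗[k] S') :=
      { carrier := {r | r • z0 = 0}
        add_mem' := fun {x y} hx hy => by
          show (x + y) • z0 = 0
          rw [add_smul, hx, hy, add_zero]
        zero_mem' := zero_smul _ _
        smul_mem' := fun c x hx => by
          show (c • x) • z0 = 0
          rw [smul_eq_mul, mul_smul, hx, smul_zero] } with hK
    have hsup : Ideal.map (Algebra.TensorProduct.includeLeft : R' →ₐ[k] R' ⊗[k] S') I ⊔
        Ideal.map (Algebra.TensorProduct.includeRight : S' →ₐ[k] R' ⊗[k] S') J ≤ K := by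
      apply sup_le
      · rw [Ideal.map_le_iff_le_comap]
        intro a ha
        exact hleft a ha
      · rw [Ideal.map_le_iff_le_comap]
        intro b hb
        exact hright b hb
    exact hsup hr
end

section
/- Let k be a field, R_1 a finitely generated k-algebra, and m ⊂ R_1 a maximal ideal with R_1/m ≅ k. If E is an injective envelope of k = R_1/m as a module over the localization (R_1)_m, then E, regarded as an R_1-module, is also an injective envelope of k over the ring R_1. -/
/-- Let `k` be a field, `R₁` a finitely generated `k`-algebra and
`𝔪 ⊂ R₁` a maximal ideal with `R₁/𝔪 ≅ k`. If `E` is an injective envelope of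
`k = R₁/𝔪` over the localization `(R₁)_𝔪`, then `E`, regarded as an `R₁`-module, is
also an injective envelope of `k` over `R₁`. -/
theorem injective_envelope_over_localization_is_injective_envelope
    (k R₁ : Type) [Field k] [CommRing R₁] [Algebra k R₁] [Algebra.FiniteType k R₁]
    (m : Ideal R₁) [m.IsMaximal] (hres : Function.Bijective (algebraMap k (R₁ ⧸ m)))
    (E : Type) [AddCommGroup E] [Module (Localization.AtPrime m) E]
    (ι : (Localization.AtPrime m ⧸ IsLocalRing.maximalIdeal (Localization.AtPrime m))
      →ₗ[Localization.AtPrime m] E)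
    (hι : IsInjectiveEnvelope (Localization.AtPrime m) ι) :
    -- `E` regarded as an `R₁`-module:
    letI : Module R₁ E := Module.compHom E (algebraMap R₁ (Localization.AtPrime m))
    -- any `R₁`-linear map from `k = R₁/𝔪` to `E` sending `1` to `ι(1)` is an
    -- injective envelope of `k` over `R₁`:
    ∀ (h : (R₁ ⧸ m) →ₗ[R₁] E),
      h (Ideal.Quotient.mk m 1) = ι (Submodule.Quotient.mk 1) →
      IsInjectiveEnvelope R₁ h := by
  set S := Localization.AtPrime m with hS
  letI : Module R₁ E := Module.compHom E (algebraMap R₁ S)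
  haveI : IsScalarTower R₁ S E :=
    ⟨fun r s e => by
      rw [Algebra.smul_def, mul_smul]
      rfl⟩
  intro h hh1
  -- basic computation
  have hsmul : ∀ (r : R₁) (e : E), r • e = algebraMap R₁ S r • e := fun _ _ => rfl
  have key : ∀ r : R₁, h (Ideal.Quotient.mk m r)
      = ι (Submodule.Quotient.mk (algebraMap R₁ S r)) := by
    intro r
    have : (Ideal.Quotient.mk m r) = r • (Ideal.Quotient.mk m 1) := by
      show Submodule.Quotient.mk (p := m) r = r • Submodule.Quotient.mk (1:R₁)
      rw [← Submodule.Quotient.mk_smul, smul_eq_mul, mul_one]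
    rw [this, map_smul, hh1, hsmul, ← map_smul]
    congr 1
    show (algebraMap R₁ S r) • Submodule.Quotient.mk 1 = _
    rw [← Submodule.Quotient.mk_smul, smul_eq_mul, mul_one]
  have hinj : Module.Injective R₁ E := by
    constructor
    intro X Y _ _ _ _ f hf g
    have hfS : Function.Injective (f.baseChange S) := by
      rw [LinearMap.baseChange_eq_ltensor]
      exact Module.Flat.lTensor_preserves_injective_linearMap f hf
    obtain ⟨hS', hcomp⟩ := hι.1.out (f.baseChange S) hfS (g.liftBaseChange S)
    refine ⟨(hS'.restrictScalars R₁) ∘ₗ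
      ((TensorProduct.mk R₁ S Y) 1), fun x => ?_⟩
    have hbc : f.baseChange S ((1:S) ⊗ₜ x) = (1:S) ⊗ₜ f x := by simp
    simp only [LinearMap.comp_apply, LinearMap.coe_restrictScalars, TensorProduct.mk_apply,
      ← hbc, hcomp, LinearMap.liftBaseChange_tmul, one_smul]
  have hι1ne : ι (Submodule.Quotient.mk 1) ≠ 0 := by
    intro hz
    have := hι.2.1 (a₁ := Submodule.Quotient.mk 1) (a₂ := 0) (by rw [hz, map_zero])
    rw [Submodule.Quotient.mk_eq_zero] at this
    exact (IsLocalRing.maximalIdeal.isMaximal S).ne_top (Ideal.eq_top_iff_one _ |>.mpr this)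
  haveI : IsSimpleModule R₁ (R₁ ⧸ m) :=
    isSimpleModule_iff_isCoatom.mpr (Ideal.isMaximal_def.mp ‹m.IsMaximal›)
  have hinj2 : Function.Injective h := by
    rw [← LinearMap.ker_eq_bot]
    rcases eq_bot_or_eq_top (LinearMap.ker h) with h1 | h1
    · exact h1
    · exfalso
      have : h (Ideal.Quotient.mk m 1) = 0 := by
        have : (Ideal.Quotient.mk m 1 : R₁ ⧸ m) ∈ LinearMap.ker h := h1 ▸ trivial
        simpa using this
      rw [hh1] at this
      exact hι1ne this
  refine ⟨hinj, hinj2, fun P hP => ?_⟩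
  -- essentiality
  obtain ⟨p, hpP, hp0⟩ := Submodule.exists_mem_ne_zero_of_ne_bot hP
  have hQ : Submodule.span S {p} ≠ ⊥ := by
    intro hbot
    have := Submodule.mem_span_singleton_self (R := S) p
    rw [hbot] at this
    exact hp0 (by simpa using this)
  obtain ⟨x, hx, hx0⟩ := Submodule.exists_mem_ne_zero_of_ne_bot (hι.2.2 _ hQ)
  obtain ⟨⟨w, hw⟩, hxQ⟩ := hx
  obtain ⟨s, hs⟩ := Submodule.mem_span_singleton.mp hxQ
  obtain ⟨t, rfl⟩ := Submodule.Quotient.mk_surjective _ w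
  obtain ⟨⟨a, u⟩, ha⟩ := IsLocalization.surj m.primeCompl s
  obtain ⟨⟨b, v⟩, hb⟩ := IsLocalization.surj m.primeCompl t
  have huv : IsUnit (algebraMap R₁ S ((u : R₁) * (v : R₁))) := by
    simpa using IsLocalization.map_units S (u * v)
  set y : E := algebraMap R₁ S ((u : R₁) * (v : R₁)) • x with hy
  have hscal : algebraMap R₁ S ((u : R₁) * (v : R₁)) * s
      = algebraMap R₁ S (a * (v : R₁)) := by
    calc algebraMap R₁ S ((u : R₁) * (v : R₁)) * s
        = (s * algebraMap R₁ S (u : R₁)) * algebraMap R₁ S (v : R₁) := by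
          rw [map_mul]; ring
      _ = algebraMap R₁ S a * algebraMap R₁ S (v : R₁) := by rw [ha]
      _ = algebraMap R₁ S (a * (v : R₁)) := (map_mul _ _ _).symm
  have hyP : y ∈ P := by
    have : y = ((a * (v : R₁)) • p : E) := by
      rw [hy, ← hs, smul_smul, hscal, ← hsmul]
    rw [this]
    exact P.smul_mem _ hpP
  have hyr : y ∈ LinearMap.range h := by
    refine ⟨Ideal.Quotient.mk m ((u : R₁) * b), ?_⟩
    rw [key, hy, ← hw, ← map_smul]
    congr 1
    rw [← Submodule.Quotient.mk_smul]
    congr 1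
    rw [smul_eq_mul, map_mul, map_mul, mul_assoc,
      mul_comm (algebraMap R₁ S (v : R₁)) t, hb]
  have hy0 : y ≠ 0 := by
    intro hz
    apply hx0
    have h2 : ((huv.unit⁻¹ : Sˣ) : S) • y = 0 := by rw [hz, smul_zero]
    rwa [hy, smul_smul, IsUnit.val_inv_mul, one_smul] at h2
  intro hbot
  have hmem : y ∈ LinearMap.range h ⊓ P := Submodule.mem_inf.mpr ⟨hyr, hyP⟩
  rw [hbot] at hmem
  exact hy0 (by simpa using hmem)
end

section
/- Let 𝒜 be an abelian category with arbitrary products and enough injectives, and let (J_α^*)_{α} be a family of bounded-below cochain complexes of injective objects of 𝒜. Then the degreewise product complex ∏_α J_α^*, formed in 𝒜, is a product of the objects J_α^* in the derived category D(𝒜). In particular, if each J_α^* is an injective resolution of an object x_α, then the product ∏_α x_α in D(𝒜) is computed by the ordinary product complex ∏_α J_α^*, and H^n(∏_α x_α) = H^n(∏_α J_α^*) for all n. -/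
open CategoryTheory Limits DerivedCategory

universe v u

namespace Statement16Aux

variable {A : Type u} [Category.{v} A] [Abelian A]

section NullHomotopy

variable (K I : CochainComplex A ℤ) (f : K ⟶ I)

lemma step (hK : ∀ n, K.ExactAt n) (hIinj : ∀ n, Injective (I.X n))
    (p q : ℤ) (hpq : p + 1 = q) (φ : K.X p ⟶ I.X (p - 1))
    (hφ : K.d (p - 1) p ≫ (f.f p - φ ≫ I.d (p - 1) p) = 0) :
    ∃ ψ : K.X q ⟶ I.X p, K.d p q ≫ ψ = f.f p - φ ≫ I.d (p - 1) p := by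
  have hex : (K.sc' (p - 1) p q).Exact :=
    (K.exactAt_iff' (p - 1) p q (by simp) (by simpa using hpq)).1 (hK p)
  haveI := hIinj p
  exact ⟨hex.descToInjective _ hφ, hex.comp_descToInjective _ hφ⟩

variable (N : ℤ)

/-- The inductively constructed homotopy. -/
noncomputable def FF (hK : ∀ n, K.ExactAt n) (hIinj : ∀ n, Injective (I.X n))
    (hIbdd : ∀ n, n < N → IsZero (I.X n)) :
    ∀ n : ℤ, {φ : K.X n ⟶ I.X (n - 1) //
      K.d (n - 1) n ≫ (f.f n - φ ≫ I.d (n - 1) n) = 0} := fun n =>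
  if h : n ≤ N then
    ⟨0, by
      have hz : f.f (n-1) = 0 := (hIbdd (n-1) (by omega)).eq_of_tgt _ _
      rw [zero_comp, sub_zero, ← f.comm, hz, zero_comp]⟩
  else
    ⟨(step K I f hK hIinj (n-1) n (by omega) (FF hK hIinj hIbdd (n-1)).1
        (FF hK hIinj hIbdd (n-1)).2).choose, by
      have hspec := (step K I f hK hIinj (n-1) n (by omega) (FF hK hIinj hIbdd (n-1)).1
        (FF hK hIinj hIbdd (n-1)).2).choose_spec
      rw [Preadditive.comp_sub, ← Category.assoc, hspec, ← f.comm,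
        Preadditive.sub_comp, Category.assoc, I.d_comp_d, comp_zero, sub_zero, sub_self]⟩
termination_by n => (n - N).toNat
decreasing_by omega

variable {K I f N}
variable (hK : ∀ n, K.ExactAt n) (hIinj : ∀ n, Injective (I.X n))
    (hIbdd : ∀ n, n < N → IsZero (I.X n))

lemma FF_le (n : ℤ) (hn : n ≤ N) : (FF K I f N hK hIinj hIbdd n).1 = 0 := by
  rw [FF, dif_pos hn]

lemma FF_comm (n : ℤ) (hn : ¬ n ≤ N) :
    K.d (n - 1) n ≫ (FF K I f N hK hIinj hIbdd n).1 =
      f.f (n - 1) - (FF K I f N hK hIinj hIbdd (n-1)).1 ≫ I.d (n - 1 - 1) (n - 1) := by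
  rw [FF, dif_neg hn]
  exact (step K I f hK hIinj (n-1) n (by omega) (FF K I f N hK hIinj hIbdd (n-1)).1
    (FF K I f N hK hIinj hIbdd (n-1)).2).choose_spec

lemma f_f_congr {p p' : ℤ} (h : p = p') :
    f.f p = eqToHom (congrArg K.X h) ≫ f.f p' ≫ eqToHom (congrArg I.X h.symm) := by
  subst h; simp

lemma d_congr (L : CochainComplex A ℤ) {p p' q q' : ℤ} (hp : p = p') (hq : q = q') :
    L.d p q = eqToHom (congrArg L.X hp) ≫ L.d p' q' ≫ eqToHom (congrArg L.X hq.symm) := by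
  subst hp; subst hq; simp

lemma FF_congr {p p' : ℤ} (h : p = p') :
    (FF K I f N hK hIinj hIbdd p).1 = eqToHom (congrArg K.X h) ≫
      (FF K I f N hK hIinj hIbdd p').1 ≫
        eqToHom (congrArg I.X (show p' - 1 = p - 1 by rw [h])) := by
  subst h; simp

variable (K I f N)

/-- a morphism from an exact complex to a bounded-below complex of injectives
is nullhomotopic -/
noncomputable def nullHomotopy : Homotopy f 0 where
  hom i j := if h : j + 1 = i then (FF K I f N hK hIinj hIbdd i).1 ≫
      eqToHom (congrArg I.X (show i - 1 = j by omega)) else 0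
  zero i j hij := dif_neg (by simpa using hij)
  comm n := by
    rw [dNext_eq _ (show (ComplexShape.up ℤ).Rel n (n+1) by simp),
      prevD_eq _ (show (ComplexShape.up ℤ).Rel (n-1) n by simp)]
    rw [dif_pos rfl, dif_pos (show n - 1 + 1 = n by omega)]
    simp only [eqToHom_refl, Category.comp_id, HomologicalComplex.zero_f_apply, add_zero]
    by_cases h : n + 1 ≤ N
    · rw [FF_le (f := f) hK hIinj hIbdd (n+1) h, FF_le (f := f) hK hIinj hIbdd n (by omega)]
      have hz : f.f n = 0 := (hIbdd n (by omega)).eq_of_tgt _ _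
      simp [hz]
    · have hc := FF_comm (f := f) hK hIinj hIbdd (n+1) h
      simp only [d_congr K (show n+1-1 = n by omega) (rfl : n+1 = n+1),
        f_f_congr (f := f) (show n+1-1 = n by omega),
        FF_congr (f := f) hK hIinj hIbdd (show n+1-1 = n by omega),
        d_congr I (show n+1-1-1 = n-1 by omega) (show n+1-1 = n by omega)] at hc
      simp only [Category.assoc, eqToHom_trans, eqToHom_refl, Category.comp_id,
        Category.id_comp, eqToHom_trans_assoc, Preadditive.sub_comp,
        Preadditive.comp_sub] at hc
      rw [← Preadditive.comp_sub] at hc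
      have hc2 := (cancel_epi (eqToHom (congrArg K.X (show n+1-1 = n by omega)))).1 hc
      have hc3 := congrArg
        (fun z => z ≫ eqToHom (congrArg I.X (show n+1-1 = n by omega))) hc2
      simp only [Category.assoc, eqToHom_trans, eqToHom_refl, Category.comp_id,
        Preadditive.sub_comp] at hc3
      rw [hc3]
      abel

end NullHomotopy

section HtpyCat

open HomotopyCategory Pretriangulated

lemma hom_to_injective_eq_zero (I : CochainComplex A ℤ)
    (hIinj : ∀ n, Injective (I.X n)) (N : ℤ) (hIbdd : ∀ n, n < N → IsZero (I.X n))
    (Z : HomotopyCategory A (ComplexShape.up ℤ))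
    (hZ : HomotopyCategory.subcategoryAcyclic A Z)
    (g : Z ⟶ (HomotopyCategory.quotient A (ComplexShape.up ℤ)).obj I) : g = 0 := by
  obtain ⟨c, rfl⟩ := (HomotopyCategory.quotient A (ComplexShape.up ℤ)).map_surjective g
  have hex : ∀ n, HomologicalComplex.ExactAt _ n :=
    (HomotopyCategory.quotient_obj_mem_subcategoryAcyclic_iff_exactAt _).1 hZ
  rw [HomotopyCategory.eq_of_homotopy c 0 (nullHomotopy _ I c N hex hIinj hIbdd),
    Functor.map_zero]
  rfl

lemma precomp_bijective_of_vanishing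
    (Y : HomotopyCategory A (ComplexShape.up ℤ))
    (hY : ∀ (Z : HomotopyCategory A (ComplexShape.up ℤ)),
      HomotopyCategory.subcategoryAcyclic A Z → ∀ g : Z ⟶ Y, g = 0)
    {X X' : HomotopyCategory A (ComplexShape.up ℤ)} (s : X ⟶ X')
    (hs : (HomotopyCategory.subcategoryAcyclic A).trW s) :
    Function.Bijective (fun g : X' ⟶ Y => s ≫ g) := by
  obtain ⟨Z, w, v, hT, hZ⟩ := hs
  constructor
  · intro g₁ g₂ h
    dsimp at h
    rw [← sub_eq_zero]
    obtain ⟨u, hu⟩ := Pretriangulated.Triangle.yoneda_exact₂ _ hT (g₁ - g₂)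
      (by dsimp only [Triangle.mk]; rw [Preadditive.comp_sub, h, sub_self]; rfl)
    rw [hu, hY _ hZ u]
    exact comp_zero
  · intro g
    obtain ⟨t, ht⟩ := Pretriangulated.Triangle.yoneda_exact₂ _
      (inv_rot_of_distTriang _ hT) g
      (hY _ ((HomotopyCategory.subcategoryAcyclic A).le_shift (-1) _ hZ) _)
    exact ⟨t, ht.symm⟩

lemma localization_map_bijective {C : Type*} {D : Type*} [Category C] [Category D]
    (L : C ⥤ D) (W : MorphismProperty C) [L.IsLocalization W]
    [W.HasLeftCalculusOfFractions] (Y : C)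
    (hY : ∀ ⦃X X' : C⦄ (s : X ⟶ X'), W s →
      Function.Bijective (fun g : X' ⟶ Y => s ≫ g)) (X : C) :
    Function.Bijective (fun g : X ⟶ Y => L.map g) := by
  constructor
  · intro g₁ g₂ h
    rw [MorphismProperty.map_eq_iff_postcomp L W] at h
    obtain ⟨Z, s, hs, fac⟩ := h
    obtain ⟨t, ht⟩ := (hY s hs).2 (𝟙 Y)
    dsimp at ht
    calc g₁ = g₁ ≫ s ≫ t := by rw [ht, Category.comp_id]
    _ = g₂ ≫ s ≫ t := by rw [← Category.assoc, fac, Category.assoc]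
    _ = g₂ := by rw [ht, Category.comp_id]
  · intro F
    obtain ⟨φ, hφ⟩ := Localization.exists_leftFraction L W F
    obtain ⟨t, ht⟩ := (hY φ.s φ.hs).2 (𝟙 Y)
    dsimp at ht
    refine ⟨φ.f ≫ t, ?_⟩
    dsimp only
    rw [hφ, L.map_comp,
      ← MorphismProperty.LeftFraction.map_comp_map_s φ L (Localization.inverts L W),
      Category.assoc, ← L.map_comp, ht, L.map_id, Category.comp_id]

end HtpyCat

section Products

variable {α : Type*} (J : α → CochainComplex A ℤ) [HasLimitsOfShape (Discrete α) A]

noncomputable def evalPiIso (n : ℤ) : (∏ᶜ J).X n ≅ ∏ᶜ fun j => (J j).X n :=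
  PreservesProduct.iso (HomologicalComplex.eval A (ComplexShape.up ℤ) n) J

lemma evalPiIso_hom_π (n : ℤ) (i : α) :
    (evalPiIso J n).hom ≫ Pi.π (fun j => (J j).X n) i = (Pi.π J i).f n :=
  piComparison_comp_π (HomologicalComplex.eval A (ComplexShape.up ℤ) n) J i

lemma eval_pi_hom_ext {n : ℤ} {X : A} (a b : X ⟶ (∏ᶜ J).X n)
    (h : ∀ i, a ≫ (Pi.π J i).f n = b ≫ (Pi.π J i).f n) : a = b := by
  let e := evalPiIso J n
  rw [← cancel_mono e.hom]
  ext i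
  have : e.hom ≫ Pi.π _ i = (Pi.π J i).f n := evalPiIso_hom_π J n i
  simp only [Category.assoc, this]
  exact h i

/-- assemble homotopies componentwise -/
noncomputable def homotopyPi {Z : CochainComplex A ℤ} {c₁ c₂ : Z ⟶ ∏ᶜ J}
    (h : ∀ i, Homotopy (c₁ ≫ Pi.π J i) (c₂ ≫ Pi.π J i)) : Homotopy c₁ c₂ where
  hom p q := Pi.lift (f := fun j => (J j).X q)
      (fun i => (h i).hom p q) ≫
    (evalPiIso J q).inv
  zero p q hpq := by
    have : (Pi.lift (f := fun j => (J j).X q) fun i => (h i).hom p q) = 0 := by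
      ext i
      simp [(h i).zero p q hpq]
    rw [this, zero_comp]
  comm n := by
    apply eval_pi_hom_ext J
    intro i
    have he : ∀ (m : ℤ),
        (evalPiIso J m).inv ≫
          (Pi.π J i).f m =
          Pi.π (fun j => (J j).X m) i := by
      intro m
      rw [Iso.inv_comp_eq]
      exact (evalPiIso_hom_π J m i).symm
    have key := (h i).comm n
    rw [dNext_eq _ (show (ComplexShape.up ℤ).Rel n (n+1) by simp),
      prevD_eq _ (show (ComplexShape.up ℤ).Rel (n-1) n by simp)] at key
    rw [dNext_eq _ (show (ComplexShape.up ℤ).Rel n (n+1) by simp),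
      prevD_eq _ (show (ComplexShape.up ℤ).Rel (n-1) n by simp)]
    simp only [Preadditive.add_comp, Category.assoc, HomologicalComplex.comp_f] at key ⊢
    rw [← (Pi.π J i).comm (n-1) n]
    rw [reassoc_of% (he (n-1)), he n]
    rw [limit.lift_π_assoc, limit.lift_π]
    exact key

lemma bijK (Z : HomotopyCategory A (ComplexShape.up ℤ)) :
    Function.Bijective (fun (g : Z ⟶ (HomotopyCategory.quotient A
        (ComplexShape.up ℤ)).obj (∏ᶜ J)) =>
      fun i => g ≫ (HomotopyCategory.quotient A (ComplexShape.up ℤ)).map (Pi.π J i)) := by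
  constructor
  · intro g₁ g₂ h
    obtain ⟨c₁, rfl⟩ := (HomotopyCategory.quotient A (ComplexShape.up ℤ)).map_surjective g₁
    obtain ⟨c₂, rfl⟩ := (HomotopyCategory.quotient A (ComplexShape.up ℤ)).map_surjective g₂
    refine HomotopyCategory.eq_of_homotopy _ _ (homotopyPi J (fun i => ?_))
    apply HomotopyCategory.homotopyOfEq
    rw [Functor.map_comp, Functor.map_comp]
    exact congrFun h i
  · intro v
    choose c hc using fun i =>
      (HomotopyCategory.quotient A (ComplexShape.up ℤ)).map_surjective (v i)
    refine ⟨(HomotopyCategory.quotient A (ComplexShape.up ℤ)).map (Pi.lift c), ?_⟩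
    funext i
    dsimp only
    exact ((HomotopyCategory.quotient A (ComplexShape.up ℤ)).map_comp _ _).symm.trans
      ((congrArg (HomotopyCategory.quotient A (ComplexShape.up ℤ)).map (Pi.lift_π c i)).trans (hc i))

lemma vanishing_pi (hinj : ∀ (i : α) (n : ℤ), Injective ((J i).X n))
    (hbdd : ∀ i : α, ∃ N : ℤ, ∀ n : ℤ, n < N → IsZero ((J i).X n))
    (Z : HomotopyCategory A (ComplexShape.up ℤ))
    (hZ : HomotopyCategory.subcategoryAcyclic A Z)
    (g : Z ⟶ (HomotopyCategory.quotient A (ComplexShape.up ℤ)).obj (∏ᶜ J)) : g = 0 := by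
  apply (bijK J Z).injective
  funext i
  dsimp only
  rw [zero_comp]
  exact hom_to_injective_eq_zero (J i) (hinj i) (hbdd i).choose (hbdd i).choose_spec
    Z hZ _

end Products

section Main

open DerivedCategory

variable [HasDerivedCategory A] {α : Type*} (J : α → CochainComplex A ℤ)
  [HasLimitsOfShape (Discrete α) A]

lemma main_bijective (hinj : ∀ (i : α) (n : ℤ), Injective ((J i).X n))
    (hbdd : ∀ i : α, ∃ N : ℤ, ∀ n : ℤ, n < N → IsZero ((J i).X n))
    (T : DerivedCategory A) :
    Function.Bijective (fun (g : T ⟶ (DerivedCategory.Q (C := A)).obj (∏ᶜ J)) =>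
      fun i => g ≫ (DerivedCategory.Q (C := A)).map (Pi.π J i)) := by
  haveI : (Qh (C := A)).EssSurj :=
    Localization.essSurj Qh (HomotopyCategory.subcategoryAcyclic A).trW
  let Hq := HomotopyCategory.quotient A (ComplexShape.up ℤ)
  let K := (Qh (C := A)).objPreimage T
  let e : Qh.obj K ≅ T := Qh.objObjPreimageIso T
  have hprod := localization_map_bijective (Qh (C := A))
    (HomotopyCategory.subcategoryAcyclic A).trW (Hq.obj (∏ᶜ J))
    (fun X X' s hs => precomp_bijective_of_vanishing _
      (vanishing_pi J hinj hbdd) s hs) K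
  have hfac : ∀ i, Function.Bijective
      (fun (c : K ⟶ Hq.obj (J i)) => (Qh (C := A)).map c) := fun i =>
    localization_map_bijective (Qh (C := A))
      (HomotopyCategory.subcategoryAcyclic A).trW (Hq.obj (J i))
      (fun X X' s hs => precomp_bijective_of_vanishing _
        (hom_to_injective_eq_zero (J i) (hinj i) (hbdd i).choose
          (hbdd i).choose_spec) s hs) K
  have hχ : Function.Bijective (fun (g : Qh.obj K ⟶ (Q (C := A)).obj (∏ᶜ J)) =>
      fun i => g ≫ Q.map (Pi.π J i)) := by
    have comp_eq : (fun (g : Qh.obj K ⟶ (Q (C := A)).obj (∏ᶜ J)) =>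
        fun i => g ≫ Q.map (Pi.π J i)) ∘ (fun (c : K ⟶ Hq.obj (∏ᶜ J)) => Qh.map c) =
        (fun (v : ∀ i, K ⟶ Hq.obj (J i)) i => (Qh (C := A)).map (v i)) ∘
          (fun c i => c ≫ Hq.map (Pi.π J i)) := by
      funext c
      funext i
      exact (Qh.map_comp c (Hq.map (Pi.π J i))).symm
    have hpi : Function.Bijective
        (fun (v : ∀ i, K ⟶ Hq.obj (J i)) i => (Qh (C := A)).map (v i)) :=
      Function.Bijective.piMap (fun i => hfac i)
    have hcomp := hpi.comp (bijK J K)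
    rw [← comp_eq] at hcomp
    exact (Function.Bijective.of_comp_iff _ hprod).1 hcomp
  have trans1 : Function.Bijective
      (fun (g : T ⟶ (Q (C := A)).obj (∏ᶜ J)) => e.hom ≫ g) :=
    ⟨fun a b hab => by simpa using congrArg (fun z => e.inv ≫ z) hab,
     fun y => ⟨e.inv ≫ y, by simp⟩⟩
  have trans2 : Function.Bijective
      (fun (v : ∀ i, Qh.obj K ⟶ (Q (C := A)).obj (J i)) i => e.inv ≫ v i) :=
    Function.Bijective.piMap (fun i =>
      ⟨fun a b hab => by simpa using congrArg (fun z => e.hom ≫ z) hab,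
       fun y => ⟨e.hom ≫ y, by simp⟩⟩)
  have final : (fun (g : T ⟶ (DerivedCategory.Q (C := A)).obj (∏ᶜ J)) =>
      fun i => g ≫ (DerivedCategory.Q (C := A)).map (Pi.π J i)) =
      (fun (v : ∀ i, Qh.obj K ⟶ (Q (C := A)).obj (J i)) i => e.inv ≫ v i) ∘
        (fun (g : Qh.obj K ⟶ (Q (C := A)).obj (∏ᶜ J)) =>
          fun i => g ≫ Q.map (Pi.π J i)) ∘
        (fun (g : T ⟶ (Q (C := A)).obj (∏ᶜ J)) => e.hom ≫ g) := by
    funext g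
    funext i
    simp
  rw [final]
  exact (trans2.comp hχ).comp trans1

noncomputable def mainIsLimit (hinj : ∀ (i : α) (n : ℤ), Injective ((J i).X n))
    (hbdd : ∀ i : α, ∃ N : ℤ, ∀ n : ℤ, n < N → IsZero ((J i).X n)) :
    IsLimit (Fan.mk ((DerivedCategory.Q (C := A)).obj (∏ᶜ J))
      (fun i => (DerivedCategory.Q (C := A)).map (Pi.π J i))) :=
  mkFanLimit _
    (fun s => ((main_bijective J hinj hbdd s.pt).surjective
      (fun i => s.proj i)).choose)
    (fun s i => congrFun ((main_bijective J hinj hbdd s.pt).surjective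
      (fun i => s.proj i)).choose_spec i)
    (fun s m hm => (main_bijective J hinj hbdd s.pt).injective (by
      funext i
      rw [congrFun ((main_bijective J hinj hbdd s.pt).surjective
        (fun i => s.proj i)).choose_spec i]
      exact hm i))

end Main

end Statement16Aux

/-- Let `𝒜` be an abelian category with arbitrary products and
enough injectives, and `(J_α)` a family of bounded-below cochain complexes of
injective objects. Then the degreewise product complex `∏_α J_α` is a product of
the `J_α` in the derived category `D(𝒜)`; in particular, if each `J_α` is an
injective resolution of an object `x_α`, then the product `∏_α x_α` in `D(𝒜)` is
computed by the ordinary product complex, and `H^n (∏_α x_α) = H^n (∏_α J_α)` for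
all `n`. -/
theorem product_of_injective_resolutions_computes_derived_product
    (A : Type u) [Category.{v} A] [Abelian A] [HasProducts A] [EnoughInjectives A]
    [HasDerivedCategory A]
    (α : Type v) (J : α → CochainComplex A ℤ)
    (hinj : ∀ (i : α) (n : ℤ), Injective ((J i).X n))
    (hbdd : ∀ i : α, ∃ N : ℤ, ∀ n : ℤ, n < N → IsZero ((J i).X n)) :
    -- the degreewise product complex is a product in the derived category:
    Nonempty (IsLimit (Fan.mk ((DerivedCategory.Q (C := A)).obj (∏ᶜ J))
      (fun i => (DerivedCategory.Q (C := A)).map (Pi.π J i)))) ∧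
    -- if moreover each `J_α` is an injective resolution of an object `x_α`, then any
    -- product `∏_α x_α` in `D(𝒜)` has the cohomology of the product complex `∏_α J_α`:
    (∀ (x : α → A)
      (f : ∀ i : α, (HomologicalComplex.single A (ComplexShape.up ℤ) 0).obj (x i) ⟶ J i),
      (∀ i, QuasiIso (f i)) →
      ∀ (P : DerivedCategory A)
        (π : ∀ i : α, P ⟶ (DerivedCategory.Q (C := A)).obj
          ((HomologicalComplex.single A (ComplexShape.up ℤ) 0).obj (x i))),
        Nonempty (IsLimit (Fan.mk P π)) →
      ∀ n : ℤ, Nonempty ((DerivedCategory.homologyFunctor A n).obj P ≅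
        (HomologicalComplex.homologyFunctor A (ComplexShape.up ℤ) n).obj (∏ᶜ J))) := by
  have L1 := Statement16Aux.mainIsLimit J hinj hbdd
  refine ⟨⟨L1⟩, ?_⟩
  intro x f hf P π hP n
  obtain ⟨hP⟩ := hP
  have hiso : ∀ i, IsIso ((DerivedCategory.Q (C := A)).map (f i)) := fun i => by
    haveI := hf i
    infer_instance
  -- `P` with the maps `π i ≫ Q.map (f i)` is a limit fan over `fun i => Q.obj (J i)`
  have L2 : IsLimit (Fan.mk P (fun i => π i ≫ (DerivedCategory.Q (C := A)).map (f i))) := by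
    refine mkFanLimit _
      (fun s => hP.lift (Fan.mk s.pt
        (fun i => s.proj i ≫ inv ((DerivedCategory.Q (C := A)).map (f i))))) ?_ ?_
    · intro s i
      have h1 := hP.fac (Fan.mk s.pt
        (fun i => s.proj i ≫ inv ((DerivedCategory.Q (C := A)).map (f i)))) ⟨i⟩
      change hP.lift (Fan.mk s.pt
        (fun i => s.proj i ≫ inv ((DerivedCategory.Q (C := A)).map (f i)))) ≫ π i =
        s.proj i ≫ inv ((DerivedCategory.Q (C := A)).map (f i)) at h1
      change hP.lift (Fan.mk s.pt
        (fun i => s.proj i ≫ inv ((DerivedCategory.Q (C := A)).map (f i)))) ≫ π i ≫ _ = s.proj i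
      rw [← Category.assoc, h1, Category.assoc, IsIso.inv_hom_id, Category.comp_id]
    · intro s m hm
      refine hP.hom_ext ?_
      rintro ⟨i⟩
      have h1 := hP.fac (Fan.mk s.pt
        (fun i => s.proj i ≫ inv ((DerivedCategory.Q (C := A)).map (f i)))) ⟨i⟩
      change hP.lift (Fan.mk s.pt
        (fun i => s.proj i ≫ inv ((DerivedCategory.Q (C := A)).map (f i)))) ≫ π i =
        s.proj i ≫ inv ((DerivedCategory.Q (C := A)).map (f i)) at h1
      change m ≫ π i = hP.lift (Fan.mk s.pt
        (fun i => s.proj i ≫ inv ((DerivedCategory.Q (C := A)).map (f i)))) ≫ π i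
      rw [h1, ← cancel_mono ((DerivedCategory.Q (C := A)).map (f i))]
      simp only [Category.assoc, IsIso.inv_hom_id, Category.comp_id]
      simpa using hm i
  let iso : P ≅ (DerivedCategory.Q (C := A)).obj (∏ᶜ J) :=
    L2.conePointUniqueUpToIso L1
  exact ⟨((DerivedCategory.homologyFunctor A n).mapIso iso).trans
    ((DerivedCategory.homologyFunctorFactors A n).app (∏ᶜ J))⟩
end

section
/- Let 𝒜 be an abelian category satisfying AB4 and admitting countable products, let A be an object of 𝒜, and set x = ∐_{i=0}^∞ A[i] in D(𝒜). The truncations x^{≥ -n} ≅ ∏_{i=0}^n A[i] form an inverse system whose transition maps are the (degreewise split surjective) projections, and the homotopy inverse limit holim_n x^{≥ -n} — defined by the triangle holim_n x^{≥ -n} → ∏_n x^{≥ -n} → ∏_n x^{≥ -n}, where the second map is 1 minus the shift — is isomorphic to the product ∏_{i=0}^∞ A[i] in D(𝒜). -/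
open CategoryTheory Limits DerivedCategory Pretriangulated

universe v u

/-- Let `𝒜` be an abelian category satisfying AB4 and admitting
countable products, `A ∈ 𝒜`, and `x = ∐_{i=0}^∞ A[i]` in `D(𝒜)`. The truncations
`x^{≥ -n} ≅ ∏_{i=0}^n A[i]` form an inverse system whose transition maps are the
projections, and the homotopy inverse limit `holimₙ x^{≥ -n}` — defined by the
triangle `holim → ∏ₙ x^{≥ -n} → ∏ₙ x^{≥ -n} → holim[1]` whose second map is `1`
minus the shift — is isomorphic to the product `∏_{i=0}^∞ A[i]` in `D(𝒜)`. -/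
theorem holim_of_truncations_iso_product
    (A : Type u) [Category.{v} A] [Abelian A] [HasCoproducts A] [AB4 A] [HasProducts A]
    [HasDerivedCategory A] (a : A)
    (x : DerivedCategory A)
    (ι : ∀ i : ℕ, (singleFunctor A (-(i : ℤ))).obj a ⟶ x)
    (hx : Nonempty (IsColimit (Cofan.mk x ι)))
    -- the inverse system of truncations `x^{≥ -n} = ∏_{i=0}^n A[i]`, with the
    -- projections as transition maps:
    (y : ℕ → DerivedCategory A)
    (hy : ∀ n : ℕ, y n = ∏ᶜ (fun i : Fin (n + 1) => (singleFunctor A (-(i : ℤ))).obj a))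
    (pmap : ∀ n : ℕ, y (n + 1) ⟶ y n)
    (hpmap : ∀ n : ℕ, pmap n = eqToHom (hy (n + 1)) ≫
      Pi.lift (fun i : Fin (n + 1) =>
        Pi.π (fun i : Fin (n + 2) => (singleFunctor A (-(i : ℤ))).obj a) i.castSucc) ≫
      eqToHom (hy n).symm)
    -- a product `∏ₙ x^{≥ -n}` in `D(𝒜)`:
    (Ppt : DerivedCategory A) (ρ : ∀ n : ℕ, Ppt ⟶ y n)
    (hP : Nonempty (IsLimit (Fan.mk Ppt ρ)))
    -- the map `1 - shift` on `∏ₙ x^{≥ -n}`: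
    (σ : Ppt ⟶ Ppt) (hσ : ∀ n : ℕ, σ ≫ ρ n = ρ n - ρ (n + 1) ≫ pmap n)
    -- a homotopy inverse limit `H = holimₙ x^{≥ -n}`:
    (H : DerivedCategory A) (e : H ⟶ Ppt) (δ : Ppt ⟶ H⟦(1 : ℤ)⟧)
    (hH : (Triangle.mk e σ δ) ∈ distTriang (DerivedCategory A))
    -- a product `∏_{i=0}^∞ A[i]` in `D(𝒜)`:
    (q : DerivedCategory A) (π : ∀ i : ℕ, q ⟶ (singleFunctor A (-(i : ℤ))).obj a)
    (hq : Nonempty (IsLimit (Fan.mk q π))) :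
    Nonempty (H ≅ q) := by
  obtain ⟨hP⟩ := hP
  obtain ⟨hq⟩ := hq
  -- extensionality for maps into `y n`
  have yext : ∀ (n : ℕ) {W : DerivedCategory A} (u v : W ⟶ y n),
      (∀ i : Fin (n + 1), u ≫ eqToHom (hy n) ≫ Pi.π _ i = v ≫ eqToHom (hy n) ≫ Pi.π _ i) →
      u = v := by
    intro n W u v h
    apply (cancel_mono (eqToHom (hy n))).1
    apply Pi.hom_ext
    intro i
    simpa using h i
  -- extensionality for maps into `Ppt`
  have Pext : ∀ {W : DerivedCategory A} (u v : W ⟶ Ppt),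
      (∀ n : ℕ, u ≫ ρ n = v ≫ ρ n) → u = v := by
    intro W u v h
    apply hP.hom_ext
    rintro ⟨n⟩
    simpa using h n
  have qext : ∀ {W : DerivedCategory A} (u v : W ⟶ q),
      (∀ i : ℕ, u ≫ π i = v ≫ π i) → u = v := by
    intro W u v h
    apply hq.hom_ext
    rintro ⟨i⟩
    simpa using h i
  -- transition maps are the projections
  have hproj : ∀ (n : ℕ) (i : Fin (n + 1)),
      pmap n ≫ eqToHom (hy n) ≫ Pi.π _ i = eqToHom (hy (n + 1)) ≫ Pi.π _ i.castSucc := by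
    intro n i
    rw [hpmap n]
    simp
  -- components of `Ppt`
  let d : ∀ (m i : ℕ), Ppt ⟶ (singleFunctor A (-(i : ℤ))).obj a := fun m i =>
    if h : i < m + 1 then ρ m ≫ eqToHom (hy m) ≫ Pi.π _ (⟨i, h⟩ : Fin (m + 1)) else 0
  have hd : ∀ (m i : ℕ) (h : i < m + 1),
      d m i = ρ m ≫ eqToHom (hy m) ≫ Pi.π _ (⟨i, h⟩ : Fin (m + 1)) := by
    intro m i h
    simp only [d, dif_pos h]
  -- the map `f : q ⟶ Ppt`
  let f : q ⟶ Ppt := hP.lift (Fan.mk q fun n =>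
    Pi.lift (fun i : Fin (n + 1) => π i) ≫ eqToHom (hy n).symm)
  have hf : ∀ n : ℕ, f ≫ ρ n =
      Pi.lift (fun i : Fin (n + 1) => π i) ≫ eqToHom (hy n).symm := by
    intro n
    simpa using hP.fac (Fan.mk q fun n =>
      Pi.lift (fun i : Fin (n + 1) => π i) ≫ eqToHom (hy n).symm) ⟨n⟩
  have hfc : ∀ (n : ℕ) (i : Fin (n + 1)),
      f ≫ ρ n ≫ eqToHom (hy n) ≫ Pi.π _ i = π i := by
    intro n i
    calc f ≫ ρ n ≫ eqToHom (hy n) ≫ Pi.π _ i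
        = (f ≫ ρ n) ≫ eqToHom (hy n) ≫ Pi.π _ i := by simp only [Category.assoc]
      _ = (Pi.lift (fun j : Fin (n + 1) => π j) ≫ eqToHom (hy n).symm) ≫
            eqToHom (hy n) ≫ Pi.π _ i := by rw [hf n]
      _ = π i := by simp
  -- the map `g : Ppt ⟶ q`
  let g : Ppt ⟶ q := hq.lift (Fan.mk Ppt fun i => d i i)
  have hg : ∀ i : ℕ, g ≫ π i = d i i := by
    intro i
    simpa using hq.fac (Fan.mk Ppt fun i => d i i) ⟨i⟩
  -- the section of `σ`
  let s : Ppt ⟶ Ppt := hP.lift (Fan.mk Ppt fun n =>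
    Pi.lift (fun i : Fin (n + 1) => -∑ m ∈ Finset.Ico (i : ℕ) n, d m i) ≫ eqToHom (hy n).symm)
  have hs : ∀ (n : ℕ) (i : Fin (n + 1)),
      s ≫ ρ n ≫ eqToHom (hy n) ≫ Pi.π _ i = -∑ m ∈ Finset.Ico (i : ℕ) n, d m i := by
    intro n i
    have hfac := hP.fac (Fan.mk Ppt fun n =>
      Pi.lift (fun i : Fin (n + 1) => -∑ m ∈ Finset.Ico (i : ℕ) n, d m i) ≫
        eqToHom (hy n).symm) ⟨n⟩
    simp only [Fan.mk_pt, Fan.mk_π_app] at hfac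
    calc s ≫ ρ n ≫ eqToHom (hy n) ≫ Pi.π _ i
        = (s ≫ ρ n) ≫ eqToHom (hy n) ≫ Pi.π _ i := by simp only [Category.assoc]
      _ = (Pi.lift (fun i : Fin (n + 1) => -∑ m ∈ Finset.Ico (i : ℕ) n, d m i) ≫
            eqToHom (hy n).symm) ≫ eqToHom (hy n) ≫ Pi.π _ i := by rw [hfac]
      _ = -∑ m ∈ Finset.Ico (i : ℕ) n, d m i := by simp
  have hsσ : s ≫ σ = 𝟙 Ppt := by
    apply Pext
    intro n
    rw [Category.assoc, hσ n, Category.id_comp]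
    apply yext
    intro i
    simp only [Preadditive.comp_sub, Preadditive.sub_comp, Category.assoc]
    rw [hs n i, hproj n i]
    have h2 := hs (n + 1) i.castSucc
    simp only [Fin.coe_castSucc] at h2
    rw [h2, Finset.sum_Ico_succ_top (Nat.lt_succ_iff.mp i.isLt), hd n (i : ℕ) i.isLt]
    simp only [Fin.eta]
    abel
  -- `δ = 0`, hence `e` is mono
  have hδ : δ = 0 := by
    have h23 : σ ≫ δ = 0 := comp_distTriang_mor_zero₂₃ _ hH
    calc δ = (s ≫ σ) ≫ δ := by rw [hsσ, Category.id_comp]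
      _ = s ≫ σ ≫ δ := by rw [Category.assoc]
      _ = 0 := by rw [h23, Limits.comp_zero]
  have hmono : Mono e := Triangle.mono₁ _ hH hδ
  -- `e ≫ σ = 0`
  have heσ : e ≫ σ = 0 := comp_distTriang_mor_zero₁₂ _ hH
  have hce : ∀ n : ℕ, e ≫ ρ n = e ≫ ρ (n + 1) ≫ pmap n := by
    intro n
    have h : e ≫ σ ≫ ρ n = e ≫ (ρ n - ρ (n + 1) ≫ pmap n) := by rw [hσ n]
    rw [← Category.assoc, heσ, Limits.zero_comp, Preadditive.comp_sub] at h
    exact (sub_eq_zero.mp h.symm)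
  have hce' : ∀ (n : ℕ) {W : DerivedCategory A} (t : y n ⟶ W),
      e ≫ ρ n ≫ t = e ≫ ρ (n + 1) ≫ pmap n ≫ t := by
    intro n W t
    calc e ≫ ρ n ≫ t = (e ≫ ρ n) ≫ t := by rw [Category.assoc]
      _ = (e ≫ ρ (n + 1) ≫ pmap n) ≫ t := by rw [hce n]
      _ = e ≫ ρ (n + 1) ≫ pmap n ≫ t := by simp only [Category.assoc]
  -- `e ≫ d m i` is independent of `m ≥ i`
  have hed : ∀ (m i : ℕ), i ≤ m → e ≫ d m i = e ≫ d i i := by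
    intro m
    induction m with
    | zero =>
      intro i hi
      have hi0 : i = 0 := Nat.le_zero.mp hi
      subst hi0
      rfl
    | succ n ih =>
      intro i hi
      rcases Nat.lt_or_ge i (n + 1) with h | h
      · have hn1 : i < n + 2 := by omega
        have key : e ≫ d (n + 1) i = e ≫ d n i := by
          rw [hd n i h, hd (n + 1) i hn1, hce' n, hproj n ⟨i, h⟩]
          rfl
        rw [key, ih i (by omega)]
      · have hieq : i = n + 1 := by omega
        subst hieq
        rfl
  -- `f ≫ σ = 0`
  have hfσ : f ≫ σ = 0 := by
    apply Pext
    intro n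
    rw [Category.assoc, hσ n, Limits.zero_comp]
    apply yext
    intro i
    simp only [Preadditive.comp_sub, Preadditive.sub_comp, Category.assoc, Limits.zero_comp]
    rw [hfc n i, hproj n i]
    have h2 := hfc (n + 1) i.castSucc
    simp only [Fin.coe_castSucc] at h2
    rw [h2, sub_self]
  -- `f ≫ g = 𝟙 q`
  have hfg : f ≫ g = 𝟙 q := by
    apply qext
    intro i
    rw [Category.assoc, hg i, Category.id_comp, hd i i (Nat.lt_succ_self i)]
    exact hfc i ⟨i, Nat.lt_succ_self i⟩
  -- `e ≫ g ≫ f = e`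
  have hegf : e ≫ g ≫ f = e := by
    apply Pext
    intro n
    apply yext
    intro i
    simp only [Category.assoc]
    rw [hfc n i, hg (i : ℕ), ← hed n (i : ℕ) (Nat.lt_succ_iff.mp i.isLt),
      hd n (i : ℕ) i.isLt]
  -- factor `f` through `e`
  obtain ⟨φ, hφ⟩ : ∃ φ : q ⟶ H, f = φ ≫ e := Triangle.coyoneda_exact₂ _ hH f hfσ
  have hφ' : f = φ ≫ e := hφ
  refine ⟨⟨e ≫ g, φ, ?_, ?_⟩⟩
  · rw [← cancel_mono e]
    simp only [Category.assoc]
    rw [← hφ', Category.id_comp]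
    exact hegf
  · rw [← Category.assoc, ← hφ']
    exact hfg
end
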